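/- Suppose δ : V → V is a k-linear map such that δ(f_S) = 0 for every S ∈ D with 1 ∈ S, and δ(f_S) = f_{S∪{1}} for every S ∈ D with 1 ∉ S and S∪{1} ∈ D; suppose moreover that for every G ∈ D_L with 1 ∉ G one has G∪{1} ∈ D. Then the vectors δ(f_F − g_F), for F ∈ D_Q with 1 ∉ F and F∪{1} ∈ D_Q, are linearly independent over k; consequently the subspace U' = span_k{f_F − g_F : F ∈ D_Q, 1 ∉ F, F∪{1} ∈ D_Q} of U satisfies dim_k δ(U') = |{F ∈ D_Q : 1 ∉ F, F∪{1} ∈ D_Q}|. (This is the abstract form of Lemma 'Sigma.bottom': there is a subspace Q̄' of Q̄ with dim δ(Q̄') = |{F ∈ Δ(Q) : 1 ∉ F, {1}∪F ∈ Δ(Q)}|.) -/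

import Mathlib

/-- The lexicographic order on finite sets of positive integers:  writing
`S = {s₁ < s₂ < …}` and `T = {t₁ < t₂ < …}`, we have `S <_L T` iff there is an index `q`
with `s_q < t_q` and `s_p = t_p` for all `p < q`. -/
def lexLt (S T : Finset ℕ) : Prop :=
  ∃ q : ℕ, ∃ (h1 : q < (S.sort (· ≤ ·)).length) (h2 : q < (T.sort (· ≤ ·)).length),
    (S.sort (· ≤ ·))[q] < (T.sort (· ≤ ·))[q] ∧
      ∀ p : ℕ, ∀ hp : p < q,
        (S.sort (· ≤ ·))[p]'(Nat.lt_trans hp h1) = (T.sort (· ≤ ·))[p]'(Nat.lt_trans hp h2)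

/-- Abstract form of Lemma `Sigma.bottom`:  the vectors `δ(f_F − g_F)`, for `F ∈ D_Q` with
`1 ∉ F` and `F ∪ {1} ∈ D_Q`, are linearly independent, so the subspace
`U' = span {f_F − g_F : F ∈ D_Q, 1 ∉ F, F ∪ {1} ∈ D_Q}` of `U` satisfies
`dim δ(U') = |{F ∈ D_Q : 1 ∉ F, F ∪ {1} ∈ D_Q}|`. -/
theorem sigma_bottom {k V : Type*} [Field k] [AddCommGroup V] [Module k V]
    (D : Finset (Finset ℕ)) (hpos : ∀ S ∈ D, 0 ∉ S)
    (f : Module.Basis ↥D k V) (U : Submodule k V)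
    (DL DQ : Set ↥D)
    (hDL : DL = {S : ↥D | f S ∉ U ⊔ Submodule.span k (f '' {R : ↥D | lexLt R.1 S.1})})
    (hDQ : DQ = DLᶜ)
    (g : ↥D → V)
    (hg : ∀ F ∈ DQ, g F ∈ Submodule.span k (f '' {G : ↥D | G ∈ DL ∧ lexLt G.1 F.1}) ∧
      f F - g F ∈ U)
    (δ : V →ₗ[k] V)
    (hδone : ∀ S : ↥D, 1 ∈ S.1 → δ (f S) = 0)
    (hδins : ∀ S : ↥D, 1 ∉ S.1 → ∀ h : insert 1 S.1 ∈ D, δ (f S) = f ⟨insert 1 S.1, h⟩)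
    (hDLins : ∀ G : ↥D, G ∈ DL → 1 ∉ G.1 → insert 1 G.1 ∈ D)
    (S4 : Set ↥D)
    (hS4 : S4 = {F : ↥D | F ∈ DQ ∧ 1 ∉ F.1 ∧
      ∃ h : insert 1 F.1 ∈ D, (⟨insert 1 F.1, h⟩ : ↥D) ∈ DQ}) :
    LinearIndependent k (fun F : S4 => δ (f F.1 - g F.1)) ∧
    Submodule.span k ((fun F : ↥D => f F - g F) '' S4) ≤ U ∧
    Module.finrank k
        (Submodule.map δ (Submodule.span k ((fun F : ↥D => f F - g F) '' S4))) =
      S4.ncard := by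
  classical
  have hmem : ∀ F : ↥D, F ∈ S4 → F ∈ DQ ∧ 1 ∉ F.1 ∧
      ∃ h : insert 1 F.1 ∈ D, (⟨insert 1 F.1, h⟩ : ↥D) ∈ DQ := by
    intro F hF; rw [hS4] at hF; exact hF
  let φ : S4 → ↥D := fun F => ⟨insert 1 (F : ↥D).1, (hmem F.1 F.2).2.2.choose⟩
  have hφnot1 : ∀ F : S4, 1 ∉ (F : ↥D).1 := fun F => (hmem F.1 F.2).2.1
  have hφval : ∀ F : S4, (φ F).1 = insert 1 (F : ↥D).1 := fun F => rfl
  have hφinj : Function.Injective φ := by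
    intro a b hab
    have h1 : insert 1 (a : ↥D).1 = insert 1 (b : ↥D).1 := congrArg Subtype.val hab
    have h2 : (a : ↥D).1 = (b : ↥D).1 := by
      have := congrArg (fun s => Finset.erase s 1) h1
      simpa [Finset.erase_insert (hφnot1 a), Finset.erase_insert (hφnot1 b)] using this
    exact Subtype.ext (Subtype.ext h2)
  let A : Set ↥D := {H : ↥D | ∃ G : ↥D, G ∈ DL ∧ 1 ∉ G.1 ∧ H.1 = insert 1 G.1}
  have hφA : ∀ F : S4, φ F ∉ A := by
    rintro F ⟨G, hGDL, hG1, hEq⟩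
    have hEq' : insert 1 (F : ↥D).1 = insert 1 G.1 := hEq
    have h2 : (F : ↥D).1 = G.1 := by
      have := congrArg (fun s => Finset.erase s 1) hEq'
      simpa [Finset.erase_insert (hφnot1 F), Finset.erase_insert hG1] using this
    have hFG : (F : ↥D) = G := Subtype.ext h2
    have hFDQ : (F : ↥D) ∈ DQ := (hmem F.1 F.2).1
    rw [hFG, hDQ] at hFDQ
    exact hFDQ hGDL
  have hδg : ∀ F : ↥D, F ∈ DQ → δ (g F) ∈ Submodule.span k (f '' A) := by
    intro F hF
    have h1 : δ (g F) ∈ Submodule.map δ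
        (Submodule.span k (f '' {G : ↥D | G ∈ DL ∧ lexLt G.1 F.1})) :=
      Submodule.mem_map_of_mem (hg F hF).1
    rw [Submodule.map_span] at h1
    refine Submodule.span_le.mpr ?_ h1
    rintro y ⟨x, ⟨G, hG, rfl⟩, rfl⟩
    by_cases h1G : 1 ∈ G.1
    · rw [hδone G h1G]; exact (Submodule.span k (f '' A)).zero_mem
    · rw [hδins G h1G (hDLins G hG.1 h1G)]
      exact Submodule.subset_span ⟨⟨insert 1 G.1, hDLins G hG.1 h1G⟩, ⟨G, hG.1, h1G, rfl⟩, rfl⟩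
  let P : V →ₗ[k] V := f.constr k (fun H => if H ∈ A then 0 else f H)
  have hPbasis : ∀ H : ↥D, P (f H) = if H ∈ A then 0 else f H := fun H =>
    f.constr_basis k _ H
  have hPkill : ∀ x ∈ Submodule.span k (f '' A), P x = 0 := by
    intro x hx
    have hle : Submodule.span k (f '' A) ≤ LinearMap.ker P := by
      refine Submodule.span_le.mpr ?_
      rintro y ⟨H, hH, rfl⟩
      simp only [SetLike.mem_coe, LinearMap.mem_ker, hPbasis H, if_pos hH]
    exact hle hx
  have hkey : ∀ F : S4, P (δ (f (F : ↥D) - g (F : ↥D))) = f (φ F) := by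
    intro F
    have hne : δ (f (F : ↥D)) = f (φ F) :=
      hδins (F : ↥D) (hφnot1 F) (φ F).2
    rw [map_sub, hne, map_sub, hPkill _ (hδg (F : ↥D) (hmem F.1 F.2).1),
      hPbasis (φ F), if_neg (hφA F)]
    simp
  have hli : LinearIndependent k (fun F : S4 => δ (f F.1 - g F.1)) := by
    apply LinearIndependent.of_comp P
    have : (P ∘ fun F : S4 => δ (f F.1 - g F.1)) = f ∘ φ := funext fun F => hkey F
    rw [this]
    exact f.linearIndependent.comp φ hφinj
  refine ⟨hli, ?_, ?_⟩
  · refine Submodule.span_le.mpr ?_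
    rintro y ⟨F, hF, rfl⟩
    exact (hg F (hmem F hF).1).2
  · haveI : Fintype S4 := (Set.toFinite S4).fintype
    have himg : δ '' ((fun F : ↥D => f F - g F) '' S4) =
        Set.range (fun F : S4 => δ (f F.1 - g F.1)) := by
      rw [← Set.image_comp]
      exact Set.image_eq_range _ _
    rw [Submodule.map_span, himg, finrank_span_eq_card hli,
      Set.ncard_eq_toFinset_card', Set.toFinset_card]
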